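/- arXiv:2112.06625 — 3 statements merged into one kernel-verified Lean document; each statement's English description precedes it below -/
import Mathlib

section
/- Uniform-φ variational bound on the Rényi divergence between mixtures: for α > 1, d_α( Σ_{i=1}^{L} ζ_i p_i ‖ Σ_{j=1}^{K} μ_j q_j )^{α−1} ≤ K^{-α} · Σ_{j=1}^{K} μ_j^{1−α} · ( Σ_{i=1}^{L} ζ_i · d_α(p_i ‖ q_j)^{(α−1)/α} )^{α}. -/
open MeasureTheory Finset
open scoped ENNReal NNReal


lemma sum_rpow_neg_bound {K : ℕ} (hK : 0 < K) {a : ℝ} (ha : 1 < a)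
    (z : Fin K → ℝ) (hz : ∀ j, 0 < z j) :
    (∑ j, z j) ^ (1 - a) ≤ (K : ℝ) ^ (-a) * ∑ j, z j ^ (1 - a) := by
  have ha0 : (0:ℝ) < a := lt_trans one_pos ha
  have ha1 : (0:ℝ) < a - 1 := sub_pos.2 ha
  have hS : 0 < ∑ j, z j := Finset.sum_pos (fun j _ => hz j) ⟨⟨0, hK⟩, mem_univ _⟩
  have hT : 0 < ∑ j, z j ^ (1 - a) :=
    Finset.sum_pos (fun j _ => Real.rpow_pos_of_pos (hz j) _) ⟨⟨0, hK⟩, mem_univ _⟩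
  have hpq : a.HolderConjugate (Real.conjExponent a) := Real.HolderConjugate.conjExponent ha
  have hH := Real.inner_le_Lp_mul_Lq_of_nonneg Finset.univ hpq
      (f := fun j => z j ^ ((1 - a) / a)) (g := fun j => z j ^ ((a - 1) / a))
      (fun j _ => (Real.rpow_pos_of_pos (hz j) _).le)
      (fun j _ => (Real.rpow_pos_of_pos (hz j) _).le)
  have e1 : ∀ j : Fin K, z j ^ ((1 - a) / a) * z j ^ ((a - 1) / a) = 1 := by
    intro j
    rw [← Real.rpow_add (hz j)]
    have : (1 - a) / a + (a - 1) / a = 0 := by ring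
    rw [this, Real.rpow_zero]
  have e2 : ∀ j : Fin K, (z j ^ ((1 - a) / a)) ^ a = z j ^ (1 - a) := by
    intro j
    rw [← Real.rpow_mul (hz j).le, div_mul_cancel₀ _ ha0.ne']
  have e3 : ∀ j : Fin K, (z j ^ ((a - 1) / a)) ^ Real.conjExponent a = z j := by
    intro j
    rw [← Real.rpow_mul (hz j).le, Real.conjExponent]
    rw [div_mul_div_comm, mul_comm (a-1) a, mul_div_mul_left _ _ ha0.ne',
      div_self ha1.ne', Real.rpow_one]
  simp only [e1, e2, e3, Finset.sum_const, card_univ, Fintype.card_fin, nsmul_eq_mul,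
    mul_one] at hH
  have hq1 : 1 / Real.conjExponent a = (a - 1) / a := by
    rw [Real.conjExponent, one_div, inv_div]
  rw [hq1] at hH
  -- hH : (K:ℝ) ≤ T ^ (1/a) * S ^ ((a-1)/a)
  have hKnn : (0:ℝ) ≤ (K:ℝ) := Nat.cast_nonneg _
  have hpow := Real.rpow_le_rpow hKnn hH ha0.le
  rw [Real.mul_rpow (Real.rpow_nonneg hT.le _) (Real.rpow_nonneg hS.le _)] at hpow
  rw [← Real.rpow_mul hT.le, ← Real.rpow_mul hS.le] at hpow
  rw [one_div_mul_cancel ha0.ne', Real.rpow_one, div_mul_cancel₀ _ ha0.ne'] at hpow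
  -- goal : S ^ (1-a) ≤ K^(-a) * T
  have hKpos : (0:ℝ) < (K:ℝ) := Nat.cast_pos.2 hK
  rw [Real.rpow_neg hKnn, inv_mul_eq_div, le_div_iff₀ (Real.rpow_pos_of_pos hKpos a)]
  calc (∑ j, z j) ^ (1 - a) * (K:ℝ) ^ a
      ≤ (∑ j, z j) ^ (1 - a) * ((∑ j, z j ^ (1-a)) * (∑ j, z j) ^ (a - 1)) := by
        apply mul_le_mul_of_nonneg_left hpow (Real.rpow_nonneg hS.le _)
    _ = ∑ j, z j ^ (1 - a) := by
        rw [mul_comm (∑ j, z j ^ (1-a)), ← mul_assoc, ← Real.rpow_add hS]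
        norm_num


lemma minkowski_step {Θ : Type*} [MeasurableSpace Θ] (μ : Measure Θ)
    {L : ℕ} (p : Fin L → Θ → ℝ) (hpmeas : ∀ i, Measurable (p i))
    (hpnn : ∀ i θ, 0 ≤ p i θ)
    (ζ : Fin L → ℝ) (hζ : ∀ i, 0 ≤ ζ i)
    {w : Θ → ℝ} (hw : Measurable w) (hwnn : ∀ θ, 0 ≤ w θ)
    {a : ℝ} (ha : 1 < a)
    (hfin : ∀ i, Integrable (fun θ => p i θ ^ a * w θ) μ) :
    ∫⁻ θ, ENNReal.ofReal ((∑ i, ζ i * p i θ) ^ a * w θ) ∂μ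
      ≤ ENNReal.ofReal ((∑ i, ζ i * (∫ θ, p i θ ^ a * w θ ∂μ) ^ (1 / a)) ^ a) := by
  have ha0 : (0:ℝ) < a := lt_trans one_pos ha
  set W : Θ → ℝ≥0∞ := fun θ => ENNReal.ofReal (w θ) with hW
  have hWmeas : Measurable W := hw.ennreal_ofReal
  set ν : Measure Θ := μ.withDensity W with hν
  -- key identity
  have key : ∀ g : Θ → ℝ, Measurable g → (∀ θ, 0 ≤ g θ) →
      ∫⁻ θ, ENNReal.ofReal (g θ ^ a * w θ) ∂μ = ∫⁻ θ, (‖g θ‖₊ : ℝ≥0∞) ^ a ∂ν := by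
    intro g hg hgnn
    rw [hν, lintegral_withDensity_eq_lintegral_mul μ hWmeas
      ((hg.nnnorm.coe_nnreal_ennreal).pow_const a)]
    apply lintegral_congr
    intro θ
    simp only [Pi.mul_apply, hW]
    rw [← enorm_eq_nnnorm, Real.enorm_eq_ofReal (hgnn θ), ENNReal.ofReal_rpow_of_nonneg (hgnn θ) ha0.le,
      ← ENNReal.ofReal_mul (hwnn θ), mul_comm (w θ)]
  have hAint : ∀ i, ∫⁻ θ, (‖p i θ‖₊ : ℝ≥0∞) ^ a ∂ν
      = ENNReal.ofReal (∫ θ, p i θ ^ a * w θ ∂μ) := by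
    intro i
    rw [← key (p i) (hpmeas i) (hpnn i),
      ofReal_integral_eq_lintegral_ofReal (hfin i)
        (ae_of_all _ fun θ => mul_nonneg (Real.rpow_nonneg (hpnn i θ) a) (hwnn θ))]
  have heLp : ∀ i, eLpNorm' (p i) a ν
      = ENNReal.ofReal ((∫ θ, p i θ ^ a * w θ ∂μ) ^ (1 / a)) := by
    intro i
    simp only [eLpNorm', enorm_eq_nnnorm]
    rw [hAint i, ← ENNReal.ofReal_rpow_of_nonneg
      (integral_nonneg fun θ => mul_nonneg (Real.rpow_nonneg (hpnn i θ) a) (hwnn θ))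
      (by positivity : (0:ℝ) ≤ 1 / a)]
  have hsmul : ∀ i, eLpNorm' (fun θ => ζ i * p i θ) a ν
      = ENNReal.ofReal (ζ i) * eLpNorm' (p i) a ν := by
    intro i
    simp only [eLpNorm', enorm_eq_nnnorm]
    have : ∀ θ, ((‖ζ i * p i θ‖₊ : ℝ≥0∞)) ^ a
        = ENNReal.ofReal (ζ i) ^ a * (‖p i θ‖₊ : ℝ≥0∞) ^ a := by
      intro θ
      rw [nnnorm_mul, ENNReal.coe_mul, ENNReal.mul_rpow_of_nonneg _ _ ha0.le,
        ← enorm_eq_nnnorm, Real.enorm_eq_ofReal (hζ i)]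
    simp only [this]
    rw [lintegral_const_mul _ (((hpmeas i).nnnorm.coe_nnreal_ennreal).pow_const a),
      ENNReal.mul_rpow_of_nonneg _ _ (by positivity : (0:ℝ) ≤ 1 / a),
      ← ENNReal.rpow_mul, mul_one_div_cancel ha0.ne', ENNReal.rpow_one]
  -- Minkowski
  have hsum : eLpNorm' (fun θ => ∑ i, ζ i * p i θ) a ν
      ≤ ∑ i, eLpNorm' (fun θ => ζ i * p i θ) a ν := by
    have := eLpNorm'_sum_le (f := fun i (θ : Θ) => ζ i * p i θ) (s := Finset.univ) (μ := ν)
      (fun i _ => ((measurable_const.mul (hpmeas i)).aestronglyMeasurable)) ha.le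
    have h2 : (∑ i : Fin L, fun θ => ζ i * p i θ) = fun θ => ∑ i, ζ i * p i θ := by
      ext θ; simp
    rwa [h2] at this
  have hgmeas : Measurable (fun θ => ∑ i, ζ i * p i θ) :=
    Finset.measurable_sum _ fun i _ => measurable_const.mul (hpmeas i)
  have hgnn : ∀ θ, 0 ≤ ∑ i, ζ i * p i θ :=
    fun θ => Finset.sum_nonneg fun i _ => mul_nonneg (hζ i) (hpnn i θ)
  rw [key _ hgmeas hgnn]
  have hrw : ∫⁻ θ, (‖∑ i, ζ i * p i θ‖₊ : ℝ≥0∞) ^ a ∂ν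
      = (eLpNorm' (fun θ => ∑ i, ζ i * p i θ) a ν) ^ a := by
    simp only [eLpNorm', enorm_eq_nnnorm]
    rw [← ENNReal.rpow_mul, one_div_mul_cancel ha0.ne', ENNReal.rpow_one]
  rw [hrw]
  calc (eLpNorm' (fun θ => ∑ i, ζ i * p i θ) a ν) ^ a
      ≤ (∑ i, eLpNorm' (fun θ => ζ i * p i θ) a ν) ^ a :=
        ENNReal.rpow_le_rpow hsum ha0.le
    _ = ENNReal.ofReal ((∑ i, ζ i * (∫ θ, p i θ ^ a * w θ ∂μ) ^ (1 / a)) ^ a) := by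
        have : ∀ i, eLpNorm' (fun θ => ζ i * p i θ) a ν
            = ENNReal.ofReal (ζ i * (∫ θ, p i θ ^ a * w θ ∂μ) ^ (1 / a)) := by
          intro i
          rw [hsmul i, heLp i, ← ENNReal.ofReal_mul (hζ i)]
        simp only [this]
        rw [← ENNReal.ofReal_sum_of_nonneg (fun i _ => mul_nonneg (hζ i)
          (Real.rpow_nonneg (integral_nonneg fun θ =>
            mul_nonneg (Real.rpow_nonneg (hpnn i θ) a) (hwnn θ)) _)),
          ENNReal.ofReal_rpow_of_nonneg (Finset.sum_nonneg fun i _ => mul_nonneg (hζ i)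
          (Real.rpow_nonneg (integral_nonneg fun θ =>
            mul_nonneg (Real.rpow_nonneg (hpnn i θ) a) (hwnn θ)) _)) ha0.le]

/-- Uniform-φ variational bound on the Rényi divergence between mixtures. -/
theorem renyi_mixtures_uniform_phi
    {Θ : Type*} [MeasurableSpace Θ] (μ : Measure Θ)
    (L K : ℕ) (hL : 0 < L) (hK : 0 < K)
    (p : Fin L → Θ → ℝ) (q : Fin K → Θ → ℝ)
    (hpmeas : ∀ i, Measurable (p i)) (hqmeas : ∀ j, Measurable (q j))
    (hpnn : ∀ i θ, 0 ≤ p i θ) (hqpos : ∀ j θ, 0 < q j θ)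
    (hpint : ∀ i, ∫ θ, p i θ ∂μ = 1) (hqint : ∀ j, ∫ θ, q j θ ∂μ = 1)
    (ζ : Fin L → ℝ) (hζ : ∀ i, ζ i ∈ Set.Icc (0 : ℝ) 1) (hζsum : ∑ i, ζ i = 1)
    (mw : Fin K → ℝ) (hmw : ∀ j, mw j ∈ Set.Ioc (0 : ℝ) 1)
    (hmwsum : ∑ j, mw j = 1)
    (a : ℝ) (ha : 1 < a)
    (hfin : ∀ i j, Integrable (fun θ => p i θ ^ a * q j θ ^ (1 - a)) μ)
    (hpos : ∀ i j, 0 < ∫ θ, p i θ ^ a * q j θ ^ (1 - a) ∂μ) :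
    ((∫ θ, (∑ i, ζ i * p i θ) ^ a * (∑ j, mw j * q j θ) ^ (1 - a) ∂μ)
        ^ (1 / (a - 1))) ^ (a - 1)
      ≤ (K : ℝ) ^ (-a) * ∑ j, mw j ^ (1 - a) *
          (∑ i, ζ i *
            ((∫ θ, p i θ ^ a * q j θ ^ (1 - a) ∂μ) ^ (1 / (a - 1)))
              ^ ((a - 1) / a)) ^ a := by
  have ha0 : (0:ℝ) < a := lt_trans one_pos ha
  have ha1 : (0:ℝ) < a - 1 := sub_pos.2 ha
  have hAnn : ∀ (i : Fin L) (j : Fin K),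
      (0:ℝ) ≤ ∫ θ, p i θ ^ a * q j θ ^ (1 - a) ∂μ := fun i j => (hpos i j).le
  have hsimp : ∀ (i : Fin L) (j : Fin K),
      ((∫ θ, p i θ ^ a * q j θ ^ (1 - a) ∂μ) ^ (1 / (a - 1))) ^ ((a - 1) / a)
        = (∫ θ, p i θ ^ a * q j θ ^ (1 - a) ∂μ) ^ (1 / a) := by
    intro i j
    rw [← Real.rpow_mul (hAnn i j)]
    congr 1
    field_simp
  simp only [hsimp]
  have hPnn : ∀ θ, (0:ℝ) ≤ ∑ i, ζ i * p i θ :=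
    fun θ => Finset.sum_nonneg fun i _ => mul_nonneg (hζ i).1 (hpnn i θ)
  have hQpos : ∀ θ, (0:ℝ) < ∑ j, mw j * q j θ :=
    fun θ => Finset.sum_pos (fun j _ => mul_pos (hmw j).1 (hqpos j θ)) ⟨⟨0, hK⟩, mem_univ _⟩
  have hfnn : ∀ θ, (0:ℝ) ≤ (∑ i, ζ i * p i θ) ^ a * (∑ j, mw j * q j θ) ^ (1 - a) :=
    fun θ => mul_nonneg (Real.rpow_nonneg (hPnn θ) _) (Real.rpow_nonneg (hQpos θ).le _)
  have hInn : (0:ℝ) ≤ ∫ θ, (∑ i, ζ i * p i θ) ^ a * (∑ j, mw j * q j θ) ^ (1 - a) ∂μ :=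
    integral_nonneg hfnn
  rw [← Real.rpow_mul hInn, one_div_mul_cancel ha1.ne', Real.rpow_one]
  have hc : (0:ℝ) ≤ (K:ℝ) ^ (-a) := Real.rpow_nonneg (Nat.cast_nonneg _) _
  have hBnn : ∀ j : Fin K, (0:ℝ) ≤
      (∑ i, ζ i * (∫ θ, p i θ ^ a * q j θ ^ (1 - a) ∂μ) ^ (1 / a)) ^ a :=
    fun j => Real.rpow_nonneg (Finset.sum_nonneg fun i _ => mul_nonneg (hζ i).1
      (Real.rpow_nonneg (hAnn i j) _)) _
  have hRnn : (0:ℝ) ≤ (K : ℝ) ^ (-a) * ∑ j, mw j ^ (1 - a) *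
      (∑ i, ζ i * (∫ θ, p i θ ^ a * q j θ ^ (1 - a) ∂μ) ^ (1 / a)) ^ a :=
    mul_nonneg hc (Finset.sum_nonneg fun j _ =>
      mul_nonneg (Real.rpow_nonneg (hmw j).1.le _) (hBnn j))
  rw [← ENNReal.ofReal_le_ofReal_iff hRnn]
  have hPmeas : Measurable fun θ => ∑ i, ζ i * p i θ :=
    Finset.measurable_sum _ fun i _ => measurable_const.mul (hpmeas i)
  have hGmeas : ∀ j : Fin K, Measurable fun θ =>
      ENNReal.ofReal ((∑ i, ζ i * p i θ) ^ a * q j θ ^ (1 - a)) :=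
    fun j => ((hPmeas.pow_const a).mul ((hqmeas j).pow_const (1 - a))).ennreal_ofReal
  calc ENNReal.ofReal (∫ θ, (∑ i, ζ i * p i θ) ^ a * (∑ j, mw j * q j θ) ^ (1 - a) ∂μ)
      ≤ ∫⁻ θ, ENNReal.ofReal
          ((∑ i, ζ i * p i θ) ^ a * (∑ j, mw j * q j θ) ^ (1 - a)) ∂μ := by
        by_cases hIf : Integrable
          (fun θ => (∑ i, ζ i * p i θ) ^ a * (∑ j, mw j * q j θ) ^ (1 - a)) μ
        · exact le_of_eq (ofReal_integral_eq_lintegral_ofReal hIf (ae_of_all _ hfnn))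
        · rw [integral_undef hIf]; simp
    _ ≤ ∫⁻ θ, ENNReal.ofReal ((K:ℝ) ^ (-a) * ∑ j, mw j ^ (1 - a) *
          ((∑ i, ζ i * p i θ) ^ a * q j θ ^ (1 - a))) ∂μ := by
        apply lintegral_mono
        intro θ
        apply ENNReal.ofReal_le_ofReal
        have hz := sum_rpow_neg_bound hK ha (fun j => mw j * q j θ)
          (fun j => mul_pos (hmw j).1 (hqpos j θ))
        have hmul := mul_le_mul_of_nonneg_left hz (Real.rpow_nonneg (hPnn θ) a)
        refine le_trans hmul (le_of_eq ?_)
        rw [mul_left_comm]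
        congr 1
        rw [Finset.mul_sum]
        refine Finset.sum_congr rfl fun j _ => ?_
        rw [Real.mul_rpow (hmw j).1.le (hqpos j θ).le]
        ring
    _ = ENNReal.ofReal ((K:ℝ) ^ (-a)) * ∑ j, ENNReal.ofReal (mw j ^ (1 - a)) *
          ∫⁻ θ, ENNReal.ofReal ((∑ i, ζ i * p i θ) ^ a * q j θ ^ (1 - a)) ∂μ := by
        have step : ∀ θ, ENNReal.ofReal ((K:ℝ) ^ (-a) * ∑ j, mw j ^ (1 - a) *
              ((∑ i, ζ i * p i θ) ^ a * q j θ ^ (1 - a)))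
            = ENNReal.ofReal ((K:ℝ) ^ (-a)) * ∑ j, ENNReal.ofReal (mw j ^ (1 - a)) *
              ENNReal.ofReal ((∑ i, ζ i * p i θ) ^ a * q j θ ^ (1 - a)) := by
          intro θ
          rw [ENNReal.ofReal_mul hc, ENNReal.ofReal_sum_of_nonneg (fun j _ =>
            mul_nonneg (Real.rpow_nonneg (hmw j).1.le _)
              (mul_nonneg (Real.rpow_nonneg (hPnn θ) _)
                (Real.rpow_nonneg (hqpos j θ).le _)))]
          congr 1
          exact Finset.sum_congr rfl fun j _ =>
            ENNReal.ofReal_mul (Real.rpow_nonneg (hmw j).1.le _)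
        simp only [step]
        rw [lintegral_const_mul _ (Finset.measurable_fun_sum _ fun j _ =>
          (hGmeas j).const_mul _)]
        congr 1
        rw [lintegral_finset_sum _ (fun j _ => (hGmeas j).const_mul _)]
        exact Finset.sum_congr rfl fun j _ => lintegral_const_mul _ (hGmeas j)
    _ ≤ ENNReal.ofReal ((K:ℝ) ^ (-a)) * ∑ j, ENNReal.ofReal (mw j ^ (1 - a)) *
          ENNReal.ofReal
            ((∑ i, ζ i * (∫ θ, p i θ ^ a * q j θ ^ (1 - a) ∂μ) ^ (1 / a)) ^ a) := by
        refine mul_le_mul_right (Finset.sum_le_sum fun j _ => mul_le_mul_right ?_ _) _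
        exact minkowski_step μ p hpmeas hpnn ζ (fun i => (hζ i).1)
          ((hqmeas j).pow_const (1 - a)) (fun θ => Real.rpow_nonneg (hqpos j θ).le _) ha
          (fun i => hfin i j)
    _ = ENNReal.ofReal ((K : ℝ) ^ (-a) * ∑ j, mw j ^ (1 - a) *
          (∑ i, ζ i * (∫ θ, p i θ ^ a * q j θ ^ (1 - a) ∂μ) ^ (1 / a)) ^ a) := by
        rw [ENNReal.ofReal_mul hc, ENNReal.ofReal_sum_of_nonneg (fun j _ =>
          mul_nonneg (Real.rpow_nonneg (hmw j).1.le _) (hBnn j))]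
        congr 1
        exact Finset.sum_congr rfl fun j _ =>
          (ENNReal.ofReal_mul (Real.rpow_nonneg (hmw j).1.le _)).symm
end

section
/- Optimal ψ-variational parameters: for fixed strictly positive φ_{ij} with Σ_{j=1}^{K} φ_{ij} = ζ_i for each i, the function F(ψ) = Σ_{i=1}^{L} Σ_{j=1}^{K} φ_{ij}^{α} ψ_{ij}^{1−α} d_{ij}^{α−1}, over all strictly positive (ψ_{ij}) satisfying Σ_{i=1}^{L} ψ_{ij} = μ_j for each j, attains its minimum at ψ*_{ij} = μ_j · φ_{ij} d_{ij}^{(α−1)/α} / ( Σ_{l=1}^{L} φ_{lj} d_{lj}^{(α−1)/α} ); that is, F(ψ*) ≤ F(ψ) for every feasible ψ. -/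
open Finset

lemma key_jensen (a : ℝ) (ha : 1 < a) {L : ℕ} (c p : Fin L → ℝ)
    (hc : ∀ i, 0 < c i) (hp : ∀ i, 0 < p i) (μ : ℝ) (hμ : 0 < μ)
    (hsum : ∑ i, p i = μ) :
    (∑ i, c i) ^ a * μ ^ (1 - a) ≤ ∑ i, c i ^ a * p i ^ (1 - a) := by
  have h := Real.rpow_arith_mean_le_arith_mean_rpow Finset.univ
      (fun i => p i / μ) (fun i => c i / p i)
      (fun i _ => div_nonneg (hp i).le hμ.le)
      (by rw [← Finset.sum_div, hsum, div_self hμ.ne'])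
      (fun i _ => div_nonneg (hc i).le (hp i).le) ha.le
  have e1 : ∑ i, (p i / μ) * (c i / p i) = (∑ i, c i) / μ := by
    rw [Finset.sum_div]
    refine Finset.sum_congr rfl fun i _ => ?_
    rw [div_mul_div_comm, mul_comm (p i), mul_div_mul_right _ _ (hp i).ne']
  have e2 : ∀ i : Fin L, (p i / μ) * (c i / p i) ^ a
      = μ⁻¹ * (c i ^ a * p i ^ (1 - a)) := by
    intro i
    rw [Real.div_rpow (hc i).le (hp i).le, Real.rpow_sub (hp i), Real.rpow_one]
    field_simp
  rw [e1] at h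
  simp only [e2, ← Finset.mul_sum] at h
  calc (∑ i, c i) ^ a * μ ^ (1 - a)
      = μ * ((∑ i, c i) / μ) ^ a := by
        rw [Real.div_rpow (Finset.sum_nonneg fun i _ => (hc i).le) hμ.le,
          Real.rpow_sub hμ, Real.rpow_one]
        field_simp
    _ ≤ μ * (μ⁻¹ * ∑ i, c i ^ a * p i ^ (1 - a)) :=
        mul_le_mul_of_nonneg_left h hμ.le
    _ = ∑ i, c i ^ a * p i ^ (1 - a) := by
        rw [← mul_assoc, mul_inv_cancel₀ hμ.ne', one_mul]

/-- Optimal ψ-variational parameters: for fixed strictly positive φ with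
row sums ζ, the variational objective is minimized over feasible ψ (strictly
positive, column sums μ) at the closed-form ψ*. -/
theorem optimal_psi_variational
    (a : ℝ) (ha : 1 < a)
    (L K : ℕ) (hL : 0 < L) (hK : 0 < K)
    (d : Fin L → Fin K → ℝ) (hd : ∀ i j, 0 < d i j)
    (ζ : Fin L → ℝ) (hζ : ∀ i, 0 < ζ i) (hζsum : ∑ i, ζ i = 1)
    (mw : Fin K → ℝ) (hmw : ∀ j, 0 < mw j) (hmwsum : ∑ j, mw j = 1)
    (φ : Fin L → Fin K → ℝ) (hφ : ∀ i j, 0 < φ i j)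
    (hφsum : ∀ i, ∑ j, φ i j = ζ i)
    (ψ : Fin L → Fin K → ℝ) (hψ : ∀ i j, 0 < ψ i j)
    (hψsum : ∀ j, ∑ i, ψ i j = mw j) :
    (∑ i, ∑ j, φ i j ^ a *
        (mw j * (φ i j * d i j ^ ((a - 1) / a)
          / ∑ l, φ l j * d l j ^ ((a - 1) / a))) ^ (1 - a) * d i j ^ (a - 1))
      ≤ ∑ i, ∑ j, φ i j ^ a * ψ i j ^ (1 - a) * d i j ^ (a - 1) := by
  rw [Finset.sum_comm]
  rw [Finset.sum_comm (s := Finset.univ) (t := Finset.univ)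
    (f := fun i j => φ i j ^ a * ψ i j ^ (1 - a) * d i j ^ (a - 1))]
  refine Finset.sum_le_sum fun j _ => ?_
  have hL' : Nonempty (Fin L) := ⟨⟨0, hL⟩⟩
  set c : Fin L → ℝ := fun i => φ i j * d i j ^ ((a - 1) / a) with hc
  have hcpos : ∀ i, 0 < c i := fun i =>
    mul_pos (hφ i j) (Real.rpow_pos_of_pos (hd i j) _)
  have hSpos : 0 < ∑ l, c l := Finset.sum_pos (fun l _ => hcpos l) univ_nonempty
  have ha0 : a ≠ 0 := by positivity
  have hca : ∀ i, c i ^ a = φ i j ^ a * d i j ^ (a - 1) := by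
    intro i
    rw [hc]
    rw [Real.mul_rpow (hφ i j).le (Real.rpow_pos_of_pos (hd i j) _).le,
      ← Real.rpow_mul (hd i j).le, div_mul_cancel₀ _ ha0]
  have hterm : ∀ i, φ i j ^ a * (mw j * (c i / ∑ l, c l)) ^ (1 - a) * d i j ^ (a - 1)
      = (mw j ^ (1 - a) * (∑ l, c l) ^ (a - 1)) * c i := by
    intro i
    have h1 : (mw j * (c i / ∑ l, c l)) ^ (1 - a)
        = mw j ^ (1 - a) * c i ^ (1 - a) * (∑ l, c l) ^ (a - 1) := by
      rw [Real.mul_rpow (hmw j).le (div_nonneg (hcpos i).le hSpos.le),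
        Real.div_rpow (hcpos i).le hSpos.le, div_eq_mul_inv,
        ← Real.rpow_neg hSpos.le, neg_sub]
      ring
    rw [h1]
    have : φ i j ^ a * d i j ^ (a - 1) * c i ^ (1 - a) = c i := by
      rw [← hca i, ← Real.rpow_add (hcpos i)]
      simp
    calc φ i j ^ a * (mw j ^ (1 - a) * c i ^ (1 - a) * (∑ l, c l) ^ (a - 1)) * d i j ^ (a - 1)
        = (φ i j ^ a * d i j ^ (a - 1) * c i ^ (1 - a)) * (mw j ^ (1 - a) * (∑ l, c l) ^ (a - 1)) := by ring
      _ = _ := by rw [this]; ring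
  calc ∑ i, φ i j ^ a * (mw j * (c i / ∑ l, c l)) ^ (1 - a) * d i j ^ (a - 1)
      = ∑ i, (mw j ^ (1 - a) * (∑ l, c l) ^ (a - 1)) * c i :=
        Finset.sum_congr rfl fun i _ => hterm i
    _ = (∑ l, c l) ^ a * mw j ^ (1 - a) := by
        rw [← Finset.mul_sum]
        have hS : ((∑ l, c l):ℝ) ^ (a - 1) * (∑ l, c l) = (∑ l, c l) ^ a := by
          nth_rw 2 [← Real.rpow_one (∑ l, c l)]
          rw [← Real.rpow_add hSpos]
          norm_num
        rw [mul_assoc, hS]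
        ring
    _ ≤ ∑ i, c i ^ a * (ψ i j) ^ (1 - a) :=
        key_jensen a ha c (fun i => ψ i j) hcpos (fun i => hψ i j) (mw j) (hmw j) (hψsum j)
    _ = ∑ i, φ i j ^ a * ψ i j ^ (1 - a) * d i j ^ (a - 1) := by
        refine Finset.sum_congr rfl fun i _ => ?_
        rw [hca i]; ring
end

section
/- Optimal φ-variational parameters: for fixed strictly positive ψ_{ij} with Σ_{i=1}^{L} ψ_{ij} = μ_j for each j, the function G(φ) = Σ_{i=1}^{L} Σ_{j=1}^{K} φ_{ij}^{α} ψ_{ij}^{1−α} d_{ij}^{α−1}, over all nonnegative (φ_{ij}) satisfying Σ_{j=1}^{K} φ_{ij} = ζ_i for each i, attains its minimum at φ*_{ij} = ζ_i · (ψ_{ij}/d_{ij}) / ( Σ_{k=1}^{K} ψ_{ik}/d_{ik} ); that is, G(φ*) ≤ G(φ) for every feasible φ. -/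
open Finset

theorem row_ineq_aux (a : ℝ) (ha : 1 < a) (K : ℕ) (hK : 0 < K)
    (w : Fin K → ℝ) (hw : ∀ j, 0 < w j)
    (c : ℝ) (hc : 0 ≤ c)
    (φ : Fin K → ℝ) (hφ : ∀ j, 0 ≤ φ j) (hsum : ∑ j, φ j = c) :
    ∑ j, (c * w j / ∑ k, w k) ^ a * w j ^ (1 - a)
      ≤ ∑ j, φ j ^ a * w j ^ (1 - a) := by
  have : Nonempty (Fin K) := ⟨⟨0, hK⟩⟩
  have hne : (Finset.univ : Finset (Fin K)).Nonempty := Finset.univ_nonempty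
  set Sp := ∑ k, w k with hSpdef
  have hSp : 0 < Sp := Finset.sum_pos (fun j _ => hw j) hne
  have hLHS : ∑ j, (c * w j / Sp) ^ a * w j ^ (1 - a) = c ^ a * Sp ^ (1 - a) := by
    have hterm : ∀ j : Fin K, (c * w j / Sp) ^ a * w j ^ (1 - a)
        = c ^ a / Sp ^ a * w j := by
      intro j
      rw [Real.div_rpow (mul_nonneg hc (hw j).le) hSp.le,
        Real.mul_rpow hc (hw j).le]
      have hwj : w j ^ a * w j ^ (1 - a) = w j := by
        rw [← Real.rpow_add (hw j)]
        norm_num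
      field_simp
      rw [mul_assoc, hwj]
    rw [Finset.sum_congr rfl (fun j _ => hterm j), ← Finset.mul_sum, ← hSpdef,
      Real.rpow_sub hSp, Real.rpow_one]
    ring
  rw [hLHS]
  have hp : ∑ j, w j / Sp = 1 := by
    rw [← Finset.sum_div, div_self hSp.ne']
  have convex := Real.rpow_arith_mean_le_arith_mean_rpow Finset.univ
    (fun j => w j / Sp) (fun j => φ j * Sp / w j)
    (fun j _ => (div_pos (hw j) hSp).le) hp
    (fun j _ => div_nonneg (mul_nonneg (hφ j) hSp.le) (hw j).le) ha.le
  have h1 : ∑ j, (w j / Sp) * (φ j * Sp / w j) = c := by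
    rw [← hsum]
    refine Finset.sum_congr rfl fun j _ => ?_
    have h1' := (hw j).ne'
    field_simp
  have h2 : ∀ j : Fin K, (w j / Sp) * (φ j * Sp / w j) ^ a
      = (φ j ^ a * w j ^ (1 - a)) * Sp ^ (a - 1) := by
    intro j
    have hwa : (0:ℝ) < w j ^ a := Real.rpow_pos_of_pos (hw j) a
    rw [Real.div_rpow (mul_nonneg (hφ j) hSp.le) (hw j).le,
        Real.mul_rpow (hφ j) hSp.le,
        Real.rpow_sub (hw j), Real.rpow_sub hSp, Real.rpow_one, Real.rpow_one]
    field_simp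
  simp only [h1, h2] at convex
  rw [← Finset.sum_mul] at convex
  have hfac : (0:ℝ) < Sp ^ (1 - a) := Real.rpow_pos_of_pos hSp _
  have := mul_le_mul_of_nonneg_right convex hfac.le
  rw [mul_assoc, ← Real.rpow_add hSp] at this
  norm_num at this
  exact this

/-- Optimal φ-variational parameters: for fixed strictly positive ψ with
column sums μ, the variational objective is minimized over feasible φ
(nonnegative, row sums ζ) at the closed-form φ*. -/
theorem optimal_phi_variational
    (a : ℝ) (ha : 1 < a)
    (L K : ℕ) (hL : 0 < L) (hK : 0 < K)
    (d : Fin L → Fin K → ℝ) (hd : ∀ i j, 0 < d i j)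
    (ζ : Fin L → ℝ) (hζ : ∀ i, 0 < ζ i) (hζsum : ∑ i, ζ i = 1)
    (mw : Fin K → ℝ) (hmw : ∀ j, 0 < mw j) (hmwsum : ∑ j, mw j = 1)
    (ψ : Fin L → Fin K → ℝ) (hψ : ∀ i j, 0 < ψ i j)
    (hψsum : ∀ j, ∑ i, ψ i j = mw j)
    (φ : Fin L → Fin K → ℝ) (hφ : ∀ i j, 0 ≤ φ i j)
    (hφsum : ∀ i, ∑ j, φ i j = ζ i) :
    (∑ i, ∑ j, (ζ i * (ψ i j / d i j) / ∑ k, ψ i k / d i k) ^ a *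
        ψ i j ^ (1 - a) * d i j ^ (a - 1))
      ≤ ∑ i, ∑ j, φ i j ^ a * ψ i j ^ (1 - a) * d i j ^ (a - 1) := by
  refine Finset.sum_le_sum fun i _ => ?_
  have hw : ∀ j, ψ i j ^ (1 - a) * d i j ^ (a - 1) = (ψ i j / d i j) ^ (1 - a) := by
    intro j
    rw [Real.div_rpow (hψ i j).le (hd i j).le, div_eq_mul_inv,
      ← Real.rpow_neg (hd i j).le, neg_sub]
  simp only [mul_assoc, hw]
  exact row_ineq_aux a ha K hK (fun j => ψ i j / d i j)
    (fun j => div_pos (hψ i j) (hd i j)) (ζ i) (hζ i).le (φ i) (hφ i) (hφsum i)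
end
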